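/- Let A ∈ ℝ^{m×n}, σ = ‖A‖², v a unit vector with ‖Av‖² < σ, and u = (σv − AᵀAv)/√(σ − ‖Av‖²). Then the operator norm of the stacked matrix (A; uᵀ) ∈ ℝ^{(m+1)×n} equals ‖A‖. -/

import Mathlib

open Matrix

/-- The operator 2-norm of a real matrix. -/
noncomputable def matOpNorm {m n : ℕ} (A : Matrix (Fin m) (Fin n) ℝ) : ℝ :=
  ‖(Matrix.toEuclideanLin A).toContinuousLinearMap‖

lemma euclid_norm_sq {k : ℕ} (y : EuclideanSpace ℝ (Fin k)) : ‖y‖^2 = y ⬝ᵥ y := by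
  rw [EuclideanSpace.norm_eq, Real.sq_sqrt (by positivity)]
  simp [dotProduct, sq]

lemma snoc_dot {m n : ℕ} (A : Matrix (Fin m) (Fin n) ℝ) (u : Fin n → ℝ) (x : Fin n → ℝ) :
    ((Matrix.of (Fin.snoc (A : Fin m → Fin n → ℝ) u)).mulVec x) ⬝ᵥ
      ((Matrix.of (Fin.snoc (A : Fin m → Fin n → ℝ) u)).mulVec x)
      = (A.mulVec x) ⬝ᵥ (A.mulVec x) + (u ⬝ᵥ x)^2 := by
  simp only [dotProduct, Matrix.mulVec, Matrix.of_apply, Fin.sum_univ_castSucc,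
    Fin.snoc_castSucc, Fin.snoc_last, sq]
  simp [Fin.snoc]

lemma sub_smul_dot {k : ℕ} (p q : Fin k → ℝ) (a b : ℝ) :
    (a • p - b • q) ⬝ᵥ (a • p - b • q)
      = a^2 * (p ⬝ᵥ p) - 2*a*b*(q ⬝ᵥ p) + b^2 * (q ⬝ᵥ q) := by
  simp only [sub_dotProduct, dotProduct_sub, smul_dotProduct,
    dotProduct_smul, smul_eq_mul, dotProduct_comm q p]
  ring

lemma le_of_sq_le' {a b : ℝ} (ha : 0 ≤ a) (hb : 0 ≤ b) (h : a^2 ≤ b^2) : a ≤ b := by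
  nlinarith

/-- Squared-norm bound from the operator norm. -/
lemma matOpNorm_dot_le {m n : ℕ} (A : Matrix (Fin m) (Fin n) ℝ) (x : Fin n → ℝ) :
    (A.mulVec x) ⬝ᵥ (A.mulVec x) ≤ (matOpNorm A)^2 * (x ⬝ᵥ x) := by
  set T := (Matrix.toEuclideanLin A).toContinuousLinearMap with hT
  have h1 := T.le_opNorm (WithLp.toLp 2 x)
  have h2 : ‖T (WithLp.toLp 2 x)‖^2
      ≤ (‖T‖ * ‖(WithLp.toLp 2 x)‖)^2 :=
    pow_le_pow_left₀ (norm_nonneg _) h1 2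
  have h3 : T (WithLp.toLp 2 x)
      = (WithLp.toLp 2 (A.mulVec x)) := rfl
  rw [h3, euclid_norm_sq] at h2
  rw [mul_pow, euclid_norm_sq] at h2
  exact h2

/-- With `σ = ‖A‖²`, `v` a unit vector with `‖Av‖² < σ`, and
`u = (σv − AᵀAv)/√(σ − ‖Av‖²)`, the operator norm of the stacked matrix
`(A; uᵀ)` equals `‖A‖`. -/
theorem imro1d_stacked_norm {m n : ℕ} (A : Matrix (Fin m) (Fin n) ℝ)
    (v : Fin n → ℝ) (hv : v ⬝ᵥ v = 1)
    (hdom : (A.mulVec v) ⬝ᵥ (A.mulVec v) < (matOpNorm A)^2) :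
    let σ : ℝ := (matOpNorm A)^2
    let u : Fin n → ℝ :=
      (Real.sqrt (σ - (A.mulVec v) ⬝ᵥ (A.mulVec v)))⁻¹ •
        (σ • v - (Aᵀ * A).mulVec v)
    matOpNorm (Matrix.of (Fin.snoc (A : Fin m → Fin n → ℝ) u)) = matOpNorm A := by
  intro σ u
  have hσdef : σ = (matOpNorm A)^2 := rfl
  set w : Fin m → ℝ := A.mulVec v with hw
  set s : ℝ := σ - w ⬝ᵥ w with hs
  have hudef : u = (Real.sqrt s)⁻¹ • (σ • v - (Aᵀ * A).mulVec v) := rfl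
  have hs0 : 0 < s := by rw [hs, hσdef]; linarith
  -- u ⬝ᵥ x formula
  have hux : ∀ x : Fin n → ℝ,
      u ⬝ᵥ x = (Real.sqrt s)⁻¹ * (σ * (v ⬝ᵥ x) - w ⬝ᵥ (A.mulVec x)) := by
    intro x
    have hAtA : ((Aᵀ * A).mulVec v) ⬝ᵥ x = w ⬝ᵥ (A.mulVec x) := by
      rw [← Matrix.mulVec_mulVec, Matrix.mulVec_transpose, ← Matrix.dotProduct_mulVec]
    rw [hudef, smul_dotProduct, sub_dotProduct, smul_dotProduct, hAtA]
    simp [smul_eq_mul]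
  -- Cauchy-Schwarz for the PSD form q(x,y) = σ (x⬝y) - (Ax)⬝(Ay)
  have hCS : ∀ x : Fin n → ℝ,
      (σ * (v ⬝ᵥ x) - w ⬝ᵥ (A.mulVec x))^2
        ≤ s * (σ * (x ⬝ᵥ x) - (A.mulVec x) ⬝ᵥ (A.mulVec x)) := by
    intro x
    have hq := matOpNorm_dot_le A (s • x - (σ * (v ⬝ᵥ x) - w ⬝ᵥ (A.mulVec x)) • v)
    have hAz : A.mulVec (s • x - (σ * (v ⬝ᵥ x) - w ⬝ᵥ (A.mulVec x)) • v)
        = s • A.mulVec x - (σ * (v ⬝ᵥ x) - w ⬝ᵥ (A.mulVec x)) • w := by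
      rw [Matrix.mulVec_sub, Matrix.mulVec_smul, Matrix.mulVec_smul, hw]
    rw [hAz, ← hσdef, sub_smul_dot, sub_smul_dot, hv] at hq
    have hwws : w ⬝ᵥ w = σ - s := by rw [hs]; ring
    rw [hwws] at hq
    have hvx : w ⬝ᵥ (s • A.mulVec x) = s * (w ⬝ᵥ A.mulVec x) := by
      rw [dotProduct_smul]; simp [smul_eq_mul]
    have h4 : s * ((σ * (v ⬝ᵥ x) - w ⬝ᵥ (A.mulVec x))^2)
        ≤ s * (s * (σ * (x ⬝ᵥ x) - (A.mulVec x) ⬝ᵥ (A.mulVec x))) := by nlinarith [hq]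
    exact (mul_le_mul_iff_right₀ hs0).mp h4
  have hB := fun x => snoc_dot A u x
  -- the squared key bound
  have hkey : ∀ x : Fin n → ℝ,
      ((Matrix.of (Fin.snoc (A : Fin m → Fin n → ℝ) u)).mulVec x) ⬝ᵥ
        ((Matrix.of (Fin.snoc (A : Fin m → Fin n → ℝ) u)).mulVec x) ≤ σ * (x ⬝ᵥ x) := by
    intro x
    rw [hB x]
    have h1 := hCS x
    have h2 : (u ⬝ᵥ x)^2 = ((Real.sqrt s)⁻¹)^2 * (σ * (v ⬝ᵥ x) - w ⬝ᵥ (A.mulVec x))^2 := by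
      rw [hux x]; ring
    have h3 : ((Real.sqrt s)⁻¹)^2 = s⁻¹ := by rw [inv_pow, Real.sq_sqrt hs0.le]
    rw [h3] at h2
    have h5 : (u ⬝ᵥ x)^2 ≤ σ * (x ⬝ᵥ x) - (A.mulVec x) ⬝ᵥ (A.mulVec x) := by
      rw [h2]
      rw [inv_mul_le_iff₀ hs0]
      linarith [h1]
    linarith
  unfold matOpNorm
  apply le_antisymm
  · apply ContinuousLinearMap.opNorm_le_bound _ (norm_nonneg _)
    intro x
    apply le_of_sq_le' (norm_nonneg _) (by positivity)
    have h3 : (Matrix.toEuclideanLin (Matrix.of (Fin.snoc (A : Fin m → Fin n → ℝ) u))).toContinuousLinearMap x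
        = (WithLp.toLp 2
            ((Matrix.of (Fin.snoc (A : Fin m → Fin n → ℝ) u)).mulVec x)) := rfl
    rw [h3, euclid_norm_sq, mul_pow, euclid_norm_sq]
    exact hkey x
  · apply ContinuousLinearMap.opNorm_le_bound _ (norm_nonneg _)
    intro x
    apply le_of_sq_le' (norm_nonneg _) (by positivity)
    have h3 : (Matrix.toEuclideanLin A).toContinuousLinearMap x
        = (WithLp.toLp 2 (A.mulVec x)) := rfl
    rw [h3, euclid_norm_sq, mul_pow, euclid_norm_sq]
    have hTB := (Matrix.toEuclideanLin
        (Matrix.of (Fin.snoc (A : Fin m → Fin n → ℝ) u))).toContinuousLinearMap.le_opNorm x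
    have h4 : ‖(Matrix.toEuclideanLin (Matrix.of (Fin.snoc (A : Fin m → Fin n → ℝ) u))).toContinuousLinearMap x‖^2
        = ((Matrix.of (Fin.snoc (A : Fin m → Fin n → ℝ) u)).mulVec x) ⬝ᵥ
          ((Matrix.of (Fin.snoc (A : Fin m → Fin n → ℝ) u)).mulVec x) := by
      rw [show (Matrix.toEuclideanLin (Matrix.of (Fin.snoc (A : Fin m → Fin n → ℝ) u))).toContinuousLinearMap x
          = (WithLp.toLp 2
              ((Matrix.of (Fin.snoc (A : Fin m → Fin n → ℝ) u)).mulVec x)) from rfl, euclid_norm_sq]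
    have h5 := pow_le_pow_left₀ (norm_nonneg _) hTB 2
    rw [h4, mul_pow, euclid_norm_sq] at h5
    have h6 := hB x
    nlinarith [sq_nonneg (u ⬝ᵥ x)]
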